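/- Let e_V : [0,∞) → ℝ² satisfy e_V'(t) = -Ψ(t)Ψ(t)ᵀ e_V(t) where Ψ : [0,∞) → ℝ² is measurable with ‖Ψ(t)‖ ≤ φ_M for all t, and suppose there exist T₁ > 0 and μ > 0 with ∫_t^{t+T₁} Ψ(τ)Ψ(τ)ᵀ dτ ≥ μ·I for all t ≥ 0 (persistent excitation). Then e_V(t) → 0 exponentially: there exist K, γ > 0 such that ‖e_V(t)‖ ≤ K e^{-γt}‖e_V(0)‖. -/

import Mathlib

open scoped RealInnerProductSpace
open MeasureTheory Set intervalIntegral

private lemma aux_ii {F : Type*} [NormedAddCommGroup F]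
    (g : ℝ → F) (a b C : ℝ) (hab : a ≤ b)
    (hg : AEStronglyMeasurable g (volume.restrict (Set.Ioc a b)))
    (hC : ∀ s ∈ Set.Ioc a b, ‖g s‖ ≤ C) : IntervalIntegrable g volume a b := by
  rw [intervalIntegrable_iff_integrableOn_Ioc_of_le hab]
  refine MeasureTheory.Integrable.mono' (MeasureTheory.integrable_const C) hg ?_
  filter_upwards [MeasureTheory.ae_restrict_mem measurableSet_Ioc] with s hs using hC s hs

private lemma aux_sq_le {a b : ℝ} (ha : 0 ≤ a) (hb : 0 ≤ b) (h : a ^ 2 ≤ b ^ 2) : a ≤ b := by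
  nlinarith

set_option maxHeartbeats 1000000 in
theorem stmt_8 (Ψ : ℝ → EuclideanSpace ℝ (Fin 2)) (e : ℝ → EuclideanSpace ℝ (Fin 2))
    (φM T₁ μ : ℝ) (hT₁ : 0 < T₁) (hμ : 0 < μ)
    (hmeas : Measurable Ψ)
    (hbound : ∀ t, 0 ≤ t → ‖Ψ t‖ ≤ φM)
    (hODE : ∀ t, 0 ≤ t → HasDerivAt e (-(⟪Ψ t, e t⟫ • Ψ t)) t)
    (hPE : ∀ t, 0 ≤ t → ∀ v : EuclideanSpace ℝ (Fin 2),
      μ * ‖v‖ ^ 2 ≤ ∫ τ in t..(t + T₁), ⟪Ψ τ, v⟫ ^ 2) :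
    ∃ K γ : ℝ, 0 < K ∧ 0 < γ ∧
      ∀ t, 0 ≤ t → ‖e t‖ ≤ K * Real.exp (-γ * t) * ‖e 0‖ := by
  classical
  have hφM : 0 ≤ φM := (norm_nonneg _).trans (hbound 0 le_rfl)
  set f : ℝ → ℝ := fun s => ⟪Ψ s, e s⟫ with hfdef
  have heC : ∀ s : Set ℝ, s ⊆ Ici (0:ℝ) → ContinuousOn e s :=
    fun s hs t ht => ((hODE t (hs ht)).continuousAt).continuousWithinAt
  have hV : ∀ t, 0 ≤ t → HasDerivAt (fun s => ‖e s‖ ^ 2) (-(2 * f t ^ 2)) t := by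
    intro t ht
    have h := (hODE t ht).inner ℝ (hODE t ht)
    have he : (fun s => ⟪e s, e s⟫) = fun s => ‖e s‖ ^ 2 :=
      funext fun s => real_inner_self_eq_norm_sq _
    rw [he] at h
    refine h.congr_deriv ?_
    simp only [inner_neg_right, inner_neg_left, real_inner_smul_left, real_inner_smul_right,
      hfdef, real_inner_comm (e t) (Ψ t)]
    ring
  have hVanti : AntitoneOn (fun s => ‖e s‖ ^ 2) (Ici (0:ℝ)) := by
    apply antitoneOn_of_deriv_nonpos (convex_Ici 0)
    · exact fun t ht => ((hV t ht).continuousAt).continuousWithinAt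
    · intro t ht
      rw [interior_Ici] at ht
      exact ((hV t (le_of_lt ht)).differentiableAt).differentiableWithinAt
    · intro t ht
      rw [interior_Ici] at ht
      rw [(hV t ht.le).deriv]
      have : (0:ℝ) ≤ 2 * f t ^ 2 := by positivity
      linarith
  have hmono : ∀ ⦃s t : ℝ⦄, 0 ≤ s → s ≤ t → ‖e t‖ ≤ ‖e s‖ := by
    intro s t hs hst
    have h2 := hVanti (mem_Ici.2 hs) (mem_Ici.2 (hs.trans hst)) hst
    simp only at h2
    nlinarith [norm_nonneg (e t), norm_nonneg (e s)]
  have heB : ∀ t, 0 ≤ t → ‖e t‖ ≤ ‖e 0‖ := fun t ht => hmono le_rfl ht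
  have he0 : (0:ℝ) ≤ ‖e 0‖ := norm_nonneg _
  have hfB : ∀ t, 0 ≤ t → |f t| ≤ φM * ‖e 0‖ := by
    intro t ht
    calc |f t| ≤ ‖Ψ t‖ * ‖e t‖ := abs_real_inner_le_norm _ _
      _ ≤ φM * ‖e 0‖ := mul_le_mul (hbound t ht) (heB t ht) (norm_nonneg _) hφM
  have hemeas : ∀ a b : ℝ, 0 ≤ a → AEMeasurable e (volume.restrict (Ioc a b)) := by
    intro a b ha
    exact (heC _ (fun x hx => ha.trans hx.1.le)).aemeasurable measurableSet_Ioc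
  have hfmeas : ∀ a b : ℝ, 0 ≤ a → AEMeasurable f (volume.restrict (Ioc a b)) :=
    fun a b ha => AEMeasurable.inner hmeas.aemeasurable.restrict (hemeas a b ha)
  -- μ ≤ φM^2 * T₁
  have hμle : μ ≤ φM ^ 2 * T₁ := by
    have hv : ‖(EuclideanSpace.single (0 : Fin 2) (1:ℝ))‖ = 1 := by
      simp [EuclideanSpace.norm_single]
    have habs : ∀ s : ℝ, 0 ≤ s → |⟪Ψ s, EuclideanSpace.single (0:Fin 2) (1:ℝ)⟫| ≤ φM := by
      intro s hs
      calc |⟪Ψ s, EuclideanSpace.single (0:Fin 2) (1:ℝ)⟫|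
          ≤ ‖Ψ s‖ * ‖(EuclideanSpace.single (0:Fin 2) (1:ℝ))‖ := abs_real_inner_le_norm _ _
        _ ≤ φM := by rw [hv, mul_one]; exact hbound s hs
    have h1 := hPE 0 le_rfl (EuclideanSpace.single 0 1)
    rw [hv] at h1
    have h2 : (∫ τ in (0:ℝ)..(0 + T₁), ⟪Ψ τ, EuclideanSpace.single (0:Fin 2) (1:ℝ)⟫ ^ 2)
        ≤ ∫ τ in (0:ℝ)..(0 + T₁), φM ^ 2 := by
      apply intervalIntegral.integral_mono_on (by linarith)
      · apply aux_ii _ _ _ (φM ^ 2) (by linarith)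
        · exact ((AEMeasurable.inner hmeas.aemeasurable.restrict aemeasurable_const).pow
            aemeasurable_const).aestronglyMeasurable
        · intro s hs
          rw [Real.norm_eq_abs, abs_pow, ← sq_abs, abs_abs]
          exact pow_le_pow_left₀ (abs_nonneg _) (habs s hs.1.le) 2
      · exact intervalIntegrable_const
      · intro s hs
        rw [← sq_abs]
        exact pow_le_pow_left₀ (abs_nonneg _) (habs s hs.1) 2
    rw [intervalIntegral.integral_const] at h2
    simp only [zero_add, smul_eq_mul, sub_zero, one_pow, mul_one] at h1 h2
    nlinarith
  set c : ℝ := 2 + 2 * φM ^ 4 * T₁ ^ 2 with hcdef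
  have hc : 0 < c := by positivity
  set q : ℝ := 1 - 2 * μ / c with hqdef
  have hq0 : 0 < q := by
    have h2 : 2 * μ < c := by nlinarith [sq_nonneg (φM ^ 2 * T₁ - 1)]
    have : 2 * μ / c < 1 := (div_lt_one hc).2 h2
    simp only [hqdef]; linarith
  have hq1 : q < 1 := by
    have : 0 < 2 * μ / c := by positivity
    simp only [hqdef]; linarith
  -- main one-step estimate
  have hstep : ∀ t, 0 ≤ t → ‖e (t + T₁)‖ ^ 2 ≤ q * ‖e t‖ ^ 2 := by
    intro t ht
    have htT : t ≤ t + T₁ := by linarith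
    set D : ℝ := ∫ s in t..(t + T₁), f s ^ 2 with hDdef
    set A : ℝ := ∫ s in t..(t + T₁), |f s| with hAdef
    have hfm := hfmeas t (t + T₁) ht
    have hD_int : IntervalIntegrable (fun s => f s ^ 2) volume t (t + T₁) := by
      apply aux_ii _ _ _ ((φM * ‖e 0‖) ^ 2) htT
        ((hfm.pow aemeasurable_const).aestronglyMeasurable)
      intro s hs
      rw [Real.norm_eq_abs, abs_pow, ← sq_abs, abs_abs]
      exact pow_le_pow_left₀ (abs_nonneg _) (hfB s (ht.trans hs.1.le)) 2
    have hA_int : IntervalIntegrable (fun s => |f s|) volume t (t + T₁) := by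
      apply aux_ii _ _ _ (φM * ‖e 0‖) htT (by
          have := hfm.norm.aestronglyMeasurable
          simpa [Real.norm_eq_abs] using this)
      intro s hs
      rw [Real.norm_eq_abs, abs_abs]
      exact hfB s (ht.trans hs.1.le)
    have hD0 : 0 ≤ D :=
      intervalIntegral.integral_nonneg htT (fun s _ => sq_nonneg _)
    have hA0 : 0 ≤ A :=
      intervalIntegral.integral_nonneg htT (fun s _ => abs_nonneg _)
    have hFTCV : ‖e (t + T₁)‖ ^ 2 - ‖e t‖ ^ 2 = ∫ s in t..(t + T₁), -(2 * f s ^ 2) := by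
      symm
      apply intervalIntegral.integral_eq_sub_of_hasDerivAt (f := fun s => ‖e s‖ ^ 2)
      · intro s hs
        rw [uIcc_of_le htT] at hs
        exact hV s (ht.trans hs.1)
      · exact (hD_int.const_mul 2).neg
    have hVdiff : ‖e t‖ ^ 2 - ‖e (t + T₁)‖ ^ 2 = 2 * D := by
      rw [intervalIntegral.integral_neg, intervalIntegral.integral_const_mul] at hFTCV
      simp only [hDdef]
      linarith
    -- displacement bound
    have hdisp : ∀ τ ∈ Icc t (t + T₁), ‖e τ - e t‖ ≤ φM * A := by
      intro τ hτ
      have hnInt : IntervalIntegrable (fun s => -(f s • Ψ s)) volume t τ := by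
        apply aux_ii _ _ _ (φM ^ 2 * ‖e 0‖) hτ.1
        · exact (((hfmeas t τ ht).smul hmeas.aemeasurable.restrict).neg).aestronglyMeasurable
        · intro s hs
          rw [norm_neg, norm_smul, Real.norm_eq_abs]
          calc |f s| * ‖Ψ s‖ ≤ (φM * ‖e 0‖) * φM :=
              mul_le_mul (hfB s (ht.trans hs.1.le)) (hbound s (ht.trans hs.1.le))
                (norm_nonneg _) (by positivity)
            _ = φM ^ 2 * ‖e 0‖ := by ring
      have hFTCe : e τ - e t = ∫ s in t..τ, -(f s • Ψ s) := by
        symm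
        apply intervalIntegral.integral_eq_sub_of_hasDerivAt
        · intro s hs
          rw [uIcc_of_le hτ.1] at hs
          exact hODE s (ht.trans hs.1)
        · exact hnInt
      have hnormInt : IntervalIntegrable (fun s => ‖-(f s • Ψ s)‖) volume t τ := hnInt.norm
      rw [hFTCe]
      calc ‖∫ s in t..τ, -(f s • Ψ s)‖ ≤ ∫ s in t..τ, ‖-(f s • Ψ s)‖ :=
            intervalIntegral.norm_integral_le_integral_norm hτ.1
        _ ≤ ∫ s in t..τ, φM * |f s| := by
            apply intervalIntegral.integral_mono_on hτ.1 hnormInt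
            · exact ((hA_int.const_mul φM).mono_set
                (by rw [uIcc_of_le hτ.1, uIcc_of_le htT]; exact Icc_subset_Icc le_rfl hτ.2))
            · intro s hs
              rw [norm_neg, norm_smul, Real.norm_eq_abs]
              calc |f s| * ‖Ψ s‖ ≤ |f s| * φM :=
                  mul_le_mul_of_nonneg_left (hbound s (ht.trans hs.1)) (abs_nonneg _)
                _ = φM * |f s| := mul_comm _ _
        _ = φM * ∫ s in t..τ, |f s| := intervalIntegral.integral_const_mul _ _
        _ ≤ φM * A := by
            apply mul_le_mul_of_nonneg_left _ hφM
            apply intervalIntegral.integral_mono_interval le_rfl hτ.1 hτ.2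
            · filter_upwards with s using abs_nonneg _
            · exact hA_int
    -- A² ≤ T₁ * D
    have hA2 : A ^ 2 ≤ T₁ * D := by
      rcases eq_or_lt_of_le hA0 with h0 | hApos
      · rw [← h0]
        have : (0:ℝ) ≤ T₁ * D := by positivity
        simpa using this
      · set δ : ℝ := A / T₁ with hδ
        have hδ0 : 0 < δ := by positivity
        have key : A ≤ D / (2 * δ) + δ / 2 * T₁ := by
          calc A ≤ ∫ s in t..(t + T₁), (f s ^ 2 / (2 * δ) + δ / 2) := by
                apply intervalIntegral.integral_mono_on htT hA_int
                · exact (hD_int.div_const _).add intervalIntegrable_const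
                · intro s _
                  have h1 := sq_nonneg (|f s| - δ)
                  have h2 : |f s| ^ 2 = f s ^ 2 := sq_abs _
                  have h4 : f s ^ 2 / (2 * δ) + δ / 2 = (f s ^ 2 + δ ^ 2) / (2 * δ) := by
                    field_simp
                  rw [h4, le_div_iff₀ (by positivity)]
                  nlinarith
            _ = D / (2 * δ) + δ / 2 * T₁ := by
                rw [intervalIntegral.integral_add (hD_int.div_const _) intervalIntegrable_const,
                  intervalIntegral.integral_div, intervalIntegral.integral_const]
                simp only [hDdef, smul_eq_mul, add_sub_cancel_left]
                ring
        have hADT : A * T₁ ≤ D * T₁ ^ 2 / (2 * A) + A * T₁ / 2 := by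
          have hstep2 : D / (2 * δ) = D * T₁ / (2 * A) := by
            rw [hδ]
            field_simp
          have hstep3 : δ / 2 * T₁ = A / 2 := by
            rw [hδ]; field_simp
          rw [hstep2, hstep3] at key
          calc A * T₁ ≤ (D * T₁ / (2 * A) + A / 2) * T₁ := by nlinarith
            _ = D * T₁ ^ 2 / (2 * A) + A * T₁ / 2 := by ring
        have h4 : A * T₁ / 2 ≤ D * T₁ ^ 2 / (2 * A) := by linarith
        rw [div_le_div_iff₀ (by norm_num) (by positivity)] at h4
        nlinarith
    -- main estimate
    have hEst : μ * ‖e t‖ ^ 2 ≤ c * D := by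
      have h1 := hPE t ht (e t)
      have h2 : (∫ τ in t..(t + T₁), ⟪Ψ τ, e t⟫ ^ 2)
          ≤ ∫ τ in t..(t + T₁), (2 * f τ ^ 2 + 2 * (φM ^ 2 * A) ^ 2) := by
        apply intervalIntegral.integral_mono_on htT
        · apply aux_ii _ _ _ ((φM * ‖e 0‖) ^ 2) htT
          · exact ((AEMeasurable.inner hmeas.aemeasurable.restrict aemeasurable_const).pow
              aemeasurable_const).aestronglyMeasurable
          · intro s hs
            rw [Real.norm_eq_abs, abs_pow, ← sq_abs, abs_abs]
            apply pow_le_pow_left₀ (abs_nonneg _)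
            calc |⟪Ψ s, e t⟫| ≤ ‖Ψ s‖ * ‖e t‖ := abs_real_inner_le_norm _ _
              _ ≤ φM * ‖e 0‖ :=
                mul_le_mul (hbound s (ht.trans hs.1.le)) (heB t ht) (norm_nonneg _) hφM
        · exact (hD_int.const_mul 2).add intervalIntegrable_const
        · intro τ hτ
          have hτ0 : 0 ≤ τ := ht.trans hτ.1
          have hsplit : ⟪Ψ τ, e t⟫ = f τ + ⟪Ψ τ, e t - e τ⟫ := by
            simp only [hfdef, inner_sub_right]
            ring
          have hb : |⟪Ψ τ, e t - e τ⟫| ≤ φM ^ 2 * A := by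
            calc |⟪Ψ τ, e t - e τ⟫| ≤ ‖Ψ τ‖ * ‖e t - e τ‖ := abs_real_inner_le_norm _ _
              _ ≤ φM * (φM * A) := by
                  apply mul_le_mul (hbound τ hτ0) _ (norm_nonneg _) hφM
                  rw [norm_sub_rev]
                  exact hdisp τ hτ
              _ = φM ^ 2 * A := by ring
          rw [hsplit]
          have hb2 : ⟪Ψ τ, e t - e τ⟫ ^ 2 ≤ (φM ^ 2 * A) ^ 2 := by
            rw [← sq_abs]
            exact pow_le_pow_left₀ (abs_nonneg _) hb 2
          nlinarith [sq_nonneg (f τ - ⟪Ψ τ, e t - e τ⟫)]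
      have h3 : (∫ τ in t..(t + T₁), (2 * f τ ^ 2 + 2 * (φM ^ 2 * A) ^ 2))
          = 2 * D + 2 * (φM ^ 2 * A) ^ 2 * T₁ := by
        rw [intervalIntegral.integral_add (hD_int.const_mul 2) intervalIntegrable_const,
          intervalIntegral.integral_const_mul, intervalIntegral.integral_const]
        simp only [hDdef, smul_eq_mul, add_sub_cancel_left]
        ring
      rw [h3] at h2
      have h5 : 2 * (φM ^ 2 * A) ^ 2 * T₁ ≤ 2 * φM ^ 4 * T₁ ^ 2 * D := by
        have hmul := mul_le_mul_of_nonneg_left hA2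
          (show (0:ℝ) ≤ 2 * φM ^ 4 * T₁ by positivity)
        nlinarith [hmul]
      simp only [hcdef]
      nlinarith
    have h8 : 2 * μ * ‖e t‖ ^ 2 ≤ c * (‖e t‖ ^ 2 - ‖e (t + T₁)‖ ^ 2) := by
      rw [hVdiff]
      linarith [hEst]
    have h9 : q * c = c - 2 * μ := by
      simp only [hqdef]
      field_simp
    have h10 : c * ‖e (t + T₁)‖ ^ 2 ≤ (c - 2 * μ) * ‖e t‖ ^ 2 := by nlinarith [h8]
    rw [← mul_le_mul_iff_right₀ hc]
    calc c * ‖e (t + T₁)‖ ^ 2 ≤ (c - 2 * μ) * ‖e t‖ ^ 2 := h10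
      _ = c * (q * ‖e t‖ ^ 2) := by rw [← h9]; ring
  -- iterate
  have hiter : ∀ n : ℕ, ‖e (n * T₁)‖ ^ 2 ≤ q ^ n * ‖e 0‖ ^ 2 := by
    intro n
    induction n with
    | zero => simp
    | succ n ih =>
      have ht : (0:ℝ) ≤ n * T₁ := by positivity
      have h1 := hstep (n * T₁) ht
      have h2 : ((n + 1 : ℕ) : ℝ) * T₁ = n * T₁ + T₁ := by push_cast; ring
      rw [h2]
      calc ‖e (n * T₁ + T₁)‖ ^ 2 ≤ q * ‖e (n * T₁)‖ ^ 2 := h1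
        _ ≤ q * (q ^ n * ‖e 0‖ ^ 2) := by nlinarith
        _ = q ^ (n + 1) * ‖e 0‖ ^ 2 := by ring
  -- conclude
  have hlogq : Real.log q < 0 := Real.log_neg hq0 hq1
  refine ⟨Real.sqrt (1 / q), -Real.log q / (2 * T₁), Real.sqrt_pos.2 (by positivity),
    div_pos (by linarith) (by linarith), ?_⟩
  intro t ht
  set n : ℕ := ⌊t / T₁⌋₊ with hn
  have hnle : (n : ℝ) * T₁ ≤ t := by
    have h1 : (n : ℝ) ≤ t / T₁ := Nat.floor_le (by positivity)
    calc (n : ℝ) * T₁ ≤ t / T₁ * T₁ := by nlinarith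
      _ = t := by field_simp
  have hlt : t / T₁ < n + 1 := Nat.lt_floor_add_one _
  have hn0 : (0:ℝ) ≤ (n : ℝ) * T₁ := by positivity
  have h1 : ‖e t‖ ^ 2 ≤ q ^ n * ‖e 0‖ ^ 2 := by
    have h2 := hVanti (mem_Ici.2 hn0) (mem_Ici.2 (hn0.trans hnle)) hnle
    simp only at h2
    exact h2.trans (hiter n)
  have hqn : q ^ n ≤ 1 / q * Real.exp (Real.log q / T₁ * t) := by
    have hqe : q ^ n = Real.exp ((n : ℝ) * Real.log q) := by
      rw [Real.exp_nat_mul, Real.exp_log hq0]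
    have hexp : (n : ℝ) * Real.log q ≤ (t / T₁ - 1) * Real.log q := by
      apply mul_le_mul_of_nonpos_right _ hlogq.le
      linarith
    have hsplit : (t / T₁ - 1) * Real.log q = Real.log q / T₁ * t + (-Real.log q) := by
      field_simp
      ring
    calc q ^ n = Real.exp ((n : ℝ) * Real.log q) := hqe
      _ ≤ Real.exp ((t / T₁ - 1) * Real.log q) := Real.exp_le_exp.2 hexp
      _ = Real.exp (-Real.log q) * Real.exp (Real.log q / T₁ * t) := by
          rw [hsplit, Real.exp_add]; ring
      _ = 1 / q * Real.exp (Real.log q / T₁ * t) := by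
          rw [Real.exp_neg, Real.exp_log hq0, one_div]
  apply aux_sq_le (norm_nonneg _) (by positivity)
  have hKsq : Real.sqrt (1 / q) ^ 2 = 1 / q := Real.sq_sqrt (by positivity)
  have hesq : Real.exp (-(-Real.log q / (2 * T₁)) * t) ^ 2
      = Real.exp (Real.log q / T₁ * t) := by
    rw [← Real.exp_nat_mul]
    congr 1
    field_simp
    ring
  calc ‖e t‖ ^ 2 ≤ q ^ n * ‖e 0‖ ^ 2 := h1
    _ ≤ 1 / q * Real.exp (Real.log q / T₁ * t) * ‖e 0‖ ^ 2 := by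
        nlinarith [sq_nonneg ‖e 0‖]
    _ = (Real.sqrt (1 / q) * Real.exp (-(-Real.log q / (2 * T₁)) * t) * ‖e 0‖) ^ 2 := by
        rw [mul_pow, mul_pow, hKsq, hesq]
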